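/- Let G₁, G₂ be groups, and α₁, β₁ ∈ Aut(G₁), γ₁, δ₁, γ₂, δ₂ ∈ Aut(G₂), α₂, β₂ ∈ Aut(G₁). For homogeneous elements m of degree (g₁, h₁) and n of degree (g₂, h₂), the braiding c(m ⊗ n) = β₁⁻¹(g₁) ▷ n ⊗ m ◁ δ₁⁻¹(h₂) sends the homogeneous component of degree (g₁, h₁) ⊗ (g₂, h₂) into the component of degree (α₂β₁⁻¹(g₁) g₂ β₂β₁⁻¹(g₁⁻¹), h₂) ⊗ (g₁, γ₁δ₁⁻¹(h₂⁻¹) h₁ h₂). -/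
import Mathlib


/-- the braiding `c(m ⊗ n) = β₁⁻¹(g₁) ▷ n ⊗ m ◁ δ₁⁻¹(h₂)` on graded
Yetter-Drinfeld-Long bimodules over group algebras sends the component of degree
`(g₁,h₁) ⊗ (g₂,h₂)` into the component of degree
`(α₂β₁⁻¹(g₁) g₂ β₂β₁⁻¹(g₁⁻¹), h₂) ⊗ (g₁, γ₁δ₁⁻¹(h₂⁻¹) h₁ h₂)`. -/
theorem ydl_braiding_grading_groups
    {G₁ G₂ M N : Type*} [Group G₁] [Group G₂]
    (α₁ β₁ α₂ β₂ : G₁ ≃* G₁) (γ₁ δ₁ γ₂ δ₂ : G₂ ≃* G₂)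
    -- left G₁-action and right G₂-action on M, forming a biset
    (lM : G₁ → M → M) (rM : M → G₂ → M)
    (hlM₁ : ∀ m, lM 1 m = m) (hlM : ∀ g g' m, lM g (lM g' m) = lM (g * g') m)
    (hrM₁ : ∀ m, rM m 1 = m) (hrM : ∀ m h h', rM (rM m h) h' = rM m (h * h'))
    (hMc : ∀ g m h, rM (lM g m) h = lM g (rM m h))
    -- left G₁-action and right G₂-action on N, forming a biset
    (lN : G₁ → N → N) (rN : N → G₂ → N)
    (hlN₁ : ∀ n, lN 1 n = n) (hlN : ∀ g g' n, lN g (lN g' n) = lN (g * g') n)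
    (hrN₁ : ∀ n, rN n 1 = n) (hrN : ∀ n h h', rN (rN n h) h' = rN n (h * h'))
    (hNc : ∀ g n h, rN (lN g n) h = lN g (rN n h))
    -- gradings
    (Mc : G₁ → G₂ → Set M) (Nc : G₁ → G₂ → Set N)
    -- (α₁,β₁,γ₁,δ₁)-compatibility for M :
    (hM : ∀ g' h' g h m, m ∈ Mc g h →
      rM (lM g' m) h' ∈ Mc (α₁ g' * g * β₁ g'⁻¹) (γ₁ h'⁻¹ * h * δ₁ h'))
    -- left and right compatibility for N with (α₂,β₂,γ₂,δ₂) :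
    (hNl : ∀ g a b n, n ∈ Nc a b → lN g n ∈ Nc (α₂ g * a * β₂ g⁻¹) b)
    (hNr : ∀ h a b n, n ∈ Nc a b → rN n h ∈ Nc a (γ₂ h⁻¹ * b * δ₂ h)) :
    ∀ (g₁ : G₁) (h₁ : G₂) (g₂ : G₁) (h₂ : G₂) (m : M) (n : N),
      m ∈ Mc g₁ h₁ → n ∈ Nc g₂ h₂ →
      lN (β₁.symm g₁) n ∈
        Nc (α₂ (β₁.symm g₁) * g₂ * β₂ (β₁.symm g₁⁻¹)) h₂ ∧
      rM m (δ₁.symm h₂) ∈ Mc g₁ (γ₁ (δ₁.symm h₂⁻¹) * h₁ * h₂) := by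
  intro g₁ h₁ g₂ h₂ m n hm hn
  constructor
  · have := hNl (β₁.symm g₁) g₂ h₂ n hn
    simpa [map_inv] using this
  · have := hM 1 (δ₁.symm h₂) g₁ h₁ m hm
    simpa [hlM₁, map_inv] using this
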